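/- (Pressure initial condition for the insulating Taylor–Green vortex, Appendix C.) Let C ∈ ℝ and define p : ℝ³ → ℝ by p(x, y, z) = C + (1/16)(cos 2x + cos 2y)(2 + cos 2z) + (1/16)(cos 4x + cos 4y)(2 − cos 4z). Then for all (x, y, z) ∈ ℝ³, Δp(x, y, z) = −cos²(z)(cos 2x + cos 2y) − 4 sin²(2z)(cos 4x + cos 4y). Moreover, with the insulating Taylor–Green fields v = (sin x cos y cos z, −cos x sin y cos z, 0) and B = (cos 2x sin 2y sin 2z, −sin 2x cos 2y sin 2z, 0), this right-hand side equals −[(∂ₓv₁)² + (∂_yv₂)² + 2(∂ₓv₂)(∂_yv₁)] + [(∂ₓB₁)² + (∂_yB₂)² + 2(∂ₓB₂)(∂_yB₁)]; that is, p solves the incompressible pressure Poisson equation for this data. -/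

import Mathlib

open Real

/-- The insulating Taylor–Green pressure candidate. -/
noncomputable def tgvPressure (C : ℝ) (x y z : ℝ) : ℝ :=
  C + (1/16) * (Real.cos (2*x) + Real.cos (2*y)) * (2 + Real.cos (2*z))
    + (1/16) * (Real.cos (4*x) + Real.cos (4*y)) * (2 - Real.cos (4*z))

/-- First component of the insulating Taylor–Green velocity field. -/
noncomputable def tgvV1 (x y z : ℝ) : ℝ := Real.sin x * Real.cos y * Real.cos z

/-- Second component of the insulating Taylor–Green velocity field. -/
noncomputable def tgvV2 (x y z : ℝ) : ℝ := -(Real.cos x * Real.sin y * Real.cos z)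

/-- First component of the insulating Taylor–Green magnetic field. -/
noncomputable def tgvB1 (x y z : ℝ) : ℝ := Real.cos (2*x) * Real.sin (2*y) * Real.sin (2*z)

/-- Second component of the insulating Taylor–Green magnetic field. -/
noncomputable def tgvB2 (x y z : ℝ) : ℝ := -(Real.sin (2*x) * Real.cos (2*y) * Real.sin (2*z))

lemma hd_cos (a t : ℝ) : HasDerivAt (fun s => Real.cos (a*s)) (-a * Real.sin (a*t)) t := by
  exact ((Real.hasDerivAt_cos (a*t)).comp t ((hasDerivAt_id t).const_mul a)).congr_deriv (by ring)

lemma hd_sin (a t : ℝ) : HasDerivAt (fun s => Real.sin (a*s)) (a * Real.cos (a*t)) t := by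
  exact ((Real.hasDerivAt_sin (a*t)).comp t ((hasDerivAt_id t).const_mul a)).congr_deriv (by ring)

lemma dP_x (C y z x : ℝ) :
    deriv (fun x'' => tgvPressure C x'' y z) x
      = (1/16) * (-2 * Real.sin (2*x)) * (2 + Real.cos (2*z))
        + (1/16) * (-4 * Real.sin (4*x)) * (2 - Real.cos (4*z)) := by
  have h : HasDerivAt (fun x'' => tgvPressure C x'' y z) _ x :=
    (((((hd_cos 2 x).add_const (Real.cos (2*y))).const_mul ((1:ℝ)/16)).mul_const
        (2 + Real.cos (2*z))).const_add C).add
      ((((hd_cos 4 x).add_const (Real.cos (4*y))).const_mul ((1:ℝ)/16)).mul_const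
        (2 - Real.cos (4*z)))
  rw [h.deriv]

lemma dP_y (C x z y : ℝ) :
    deriv (fun y'' => tgvPressure C x y'' z) y
      = (1/16) * (-2 * Real.sin (2*y)) * (2 + Real.cos (2*z))
        + (1/16) * (-4 * Real.sin (4*y)) * (2 - Real.cos (4*z)) := by
  have h : HasDerivAt (fun y'' => tgvPressure C x y'' z)
      ((1/16) * (-2 * Real.sin (2*y)) * (2 + Real.cos (2*z))
        + (1/16) * (-4 * Real.sin (4*y)) * (2 - Real.cos (4*z))) y := by
    have := (((((hd_cos 2 y).const_add (Real.cos (2*x))).const_mul ((1:ℝ)/16)).mul_const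
        (2 + Real.cos (2*z))).const_add C).add
      ((((hd_cos 4 y).const_add (Real.cos (4*x))).const_mul ((1:ℝ)/16)).mul_const
        (2 - Real.cos (4*z)))
    exact this.congr_deriv (by ring)
  exact h.deriv

lemma dP_z (C x y z : ℝ) :
    deriv (fun z'' => tgvPressure C x y z'') z
      = (1/16) * (Real.cos (2*x) + Real.cos (2*y)) * (-2 * Real.sin (2*z))
        + (1/16) * (Real.cos (4*x) + Real.cos (4*y)) * (4 * Real.sin (4*z)) := by
  have h : HasDerivAt (fun z'' => tgvPressure C x y z'')
      ((1/16) * (Real.cos (2*x) + Real.cos (2*y)) * (-2 * Real.sin (2*z))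
        + (1/16) * (Real.cos (4*x) + Real.cos (4*y)) * (4 * Real.sin (4*z))) z := by
    have := ((((hd_cos 2 z).const_add 2).const_mul
        ((1/16) * (Real.cos (2*x) + Real.cos (2*y)))).const_add C).add
      (((hd_cos 4 z).const_sub 2).const_mul
        ((1/16) * (Real.cos (4*x) + Real.cos (4*y))))
    exact this.congr_deriv (by ring)
  exact h.deriv

/-- **Pressure initial condition for the insulating Taylor–Green vortex** (Appendix C).
The explicit pressure solves `Δp = −cos²z (cos 2x + cos 2y) − 4 sin² 2z (cos 4x + cos 4y)`,
and this right-hand side equals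
`−[(∂ₓv₁)² + (∂_yv₂)² + 2(∂ₓv₂)(∂_yv₁)] + [(∂ₓB₁)² + (∂_yB₂)² + 2(∂ₓB₂)(∂_yB₁)]`,
i.e. `p` solves the incompressible pressure Poisson equation for this data. -/
theorem tgv_pressure_poisson (C : ℝ) : ∀ x y z : ℝ,
    (deriv (fun x' => deriv (fun x'' => tgvPressure C x'' y z) x') x
      + deriv (fun y' => deriv (fun y'' => tgvPressure C x y'' z) y') y
      + deriv (fun z' => deriv (fun z'' => tgvPressure C x y z'') z') z
      = -(Real.cos z)^2 * (Real.cos (2*x) + Real.cos (2*y))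
        - 4 * (Real.sin (2*z))^2 * (Real.cos (4*x) + Real.cos (4*y)))
    ∧ (-(Real.cos z)^2 * (Real.cos (2*x) + Real.cos (2*y))
        - 4 * (Real.sin (2*z))^2 * (Real.cos (4*x) + Real.cos (4*y))
      = -((deriv (fun x' => tgvV1 x' y z) x)^2 + (deriv (fun y' => tgvV2 x y' z) y)^2
            + 2 * (deriv (fun x' => tgvV2 x' y z) x) * (deriv (fun y' => tgvV1 x y' z) y))
        + ((deriv (fun x' => tgvB1 x' y z) x)^2 + (deriv (fun y' => tgvB2 x y' z) y)^2
            + 2 * (deriv (fun x' => tgvB2 x' y z) x) * (deriv (fun y' => tgvB1 x y' z) y))) := by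
  intro x y z
  constructor
  · -- second derivatives
    have hx : deriv (fun x' => deriv (fun x'' => tgvPressure C x'' y z) x') x
        = (1/16) * (-4 * Real.cos (2*x)) * (2 + Real.cos (2*z))
          + (1/16) * (-16 * Real.cos (4*x)) * (2 - Real.cos (4*z)) := by
      have hfun : (fun x' => deriv (fun x'' => tgvPressure C x'' y z) x')
          = fun x' => (1/16) * (-2 * Real.sin (2*x')) * (2 + Real.cos (2*z))
            + (1/16) * (-4 * Real.sin (4*x')) * (2 - Real.cos (4*z)) :=
        funext (dP_x C y z)
      rw [hfun]
      have h : HasDerivAt (fun x' => (1/16) * (-2 * Real.sin (2*x')) * (2 + Real.cos (2*z))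
          + (1/16) * (-4 * Real.sin (4*x')) * (2 - Real.cos (4*z)))
          ((1/16) * (-4 * Real.cos (2*x)) * (2 + Real.cos (2*z))
            + (1/16) * (-16 * Real.cos (4*x)) * (2 - Real.cos (4*z))) x := by
        have := ((((hd_sin 2 x).const_mul (-2:ℝ)).const_mul ((1:ℝ)/16)).mul_const
            (2 + Real.cos (2*z))).add
          ((((hd_sin 4 x).const_mul (-4:ℝ)).const_mul ((1:ℝ)/16)).mul_const
            (2 - Real.cos (4*z)))
        exact this.congr_deriv (by ring)
      exact h.deriv
    have hy : deriv (fun y' => deriv (fun y'' => tgvPressure C x y'' z) y') y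
        = (1/16) * (-4 * Real.cos (2*y)) * (2 + Real.cos (2*z))
          + (1/16) * (-16 * Real.cos (4*y)) * (2 - Real.cos (4*z)) := by
      have hfun : (fun y' => deriv (fun y'' => tgvPressure C x y'' z) y')
          = fun y' => (1/16) * (-2 * Real.sin (2*y')) * (2 + Real.cos (2*z))
            + (1/16) * (-4 * Real.sin (4*y')) * (2 - Real.cos (4*z)) :=
        funext (dP_y C x z)
      rw [hfun]
      have h : HasDerivAt (fun y' => (1/16) * (-2 * Real.sin (2*y')) * (2 + Real.cos (2*z))
          + (1/16) * (-4 * Real.sin (4*y')) * (2 - Real.cos (4*z)))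
          ((1/16) * (-4 * Real.cos (2*y)) * (2 + Real.cos (2*z))
            + (1/16) * (-16 * Real.cos (4*y)) * (2 - Real.cos (4*z))) y := by
        have := ((((hd_sin 2 y).const_mul (-2:ℝ)).const_mul ((1:ℝ)/16)).mul_const
            (2 + Real.cos (2*z))).add
          ((((hd_sin 4 y).const_mul (-4:ℝ)).const_mul ((1:ℝ)/16)).mul_const
            (2 - Real.cos (4*z)))
        exact this.congr_deriv (by ring)
      exact h.deriv
    have hz : deriv (fun z' => deriv (fun z'' => tgvPressure C x y z'') z') z
        = (1/16) * (Real.cos (2*x) + Real.cos (2*y)) * (-4 * Real.cos (2*z))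
          + (1/16) * (Real.cos (4*x) + Real.cos (4*y)) * (16 * Real.cos (4*z)) := by
      have hfun : (fun z' => deriv (fun z'' => tgvPressure C x y z'') z')
          = fun z' => (1/16) * (Real.cos (2*x) + Real.cos (2*y)) * (-2 * Real.sin (2*z'))
            + (1/16) * (Real.cos (4*x) + Real.cos (4*y)) * (4 * Real.sin (4*z')) :=
        funext (dP_z C x y)
      rw [hfun]
      have h : HasDerivAt (fun z' =>
          (1/16) * (Real.cos (2*x) + Real.cos (2*y)) * (-2 * Real.sin (2*z'))
            + (1/16) * (Real.cos (4*x) + Real.cos (4*y)) * (4 * Real.sin (4*z')))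
          ((1/16) * (Real.cos (2*x) + Real.cos (2*y)) * (-4 * Real.cos (2*z))
            + (1/16) * (Real.cos (4*x) + Real.cos (4*y)) * (16 * Real.cos (4*z))) z := by
        have := (((hd_sin 2 z).const_mul (-2:ℝ)).const_mul
            ((1/16) * (Real.cos (2*x) + Real.cos (2*y)))).add
          (((hd_sin 4 z).const_mul (4:ℝ)).const_mul
            ((1/16) * (Real.cos (4*x) + Real.cos (4*y))))
        exact this.congr_deriv (by ring)
      exact h.deriv
    rw [hx, hy, hz]
    rw [show (4:ℝ)*z = 2*(2*z) by ring]
    rw [Real.cos_two_mul (2*z), Real.cos_two_mul z, Real.sin_two_mul z]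
    have hz2 : Real.sin z ^ 2 = 1 - Real.cos z ^ 2 := Real.sin_sq z
    linear_combination (16 * Real.cos z ^ 2 * (Real.cos (4*x) + Real.cos (4*y))) * hz2
  · -- first derivatives of v and B
    have hv1x : deriv (fun x' => tgvV1 x' y z) x
        = Real.cos x * Real.cos y * Real.cos z :=
      (((Real.hasDerivAt_sin x).mul_const (Real.cos y)).mul_const (Real.cos z)).deriv
    have hv2y : deriv (fun y' => tgvV2 x y' z) y
        = -(Real.cos x * Real.cos y * Real.cos z) := by
      have h : HasDerivAt (fun y' => tgvV2 x y' z)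
          (-(Real.cos x * Real.cos y * Real.cos z)) y := by
        have := ((((Real.hasDerivAt_sin y).const_mul (Real.cos x)).mul_const (Real.cos z)).neg)
        exact this.congr_deriv (by ring)
      exact h.deriv
    have hv2x : deriv (fun x' => tgvV2 x' y z) x
        = Real.sin x * Real.sin y * Real.cos z := by
      have h : HasDerivAt (fun x' => tgvV2 x' y z)
          (Real.sin x * Real.sin y * Real.cos z) x := by
        have := ((((Real.hasDerivAt_cos x).mul_const (Real.sin y)).mul_const (Real.cos z)).neg)
        exact this.congr_deriv (by ring)
      exact h.deriv
    have hv1y : deriv (fun y' => tgvV1 x y' z) y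
        = -(Real.sin x * Real.sin y * Real.cos z) := by
      have h : HasDerivAt (fun y' => tgvV1 x y' z)
          (-(Real.sin x * Real.sin y * Real.cos z)) y := by
        have := (((Real.hasDerivAt_cos y).const_mul (Real.sin x)).mul_const (Real.cos z))
        exact this.congr_deriv (by ring)
      exact h.deriv
    have hb1x : deriv (fun x' => tgvB1 x' y z) x
        = -2 * Real.sin (2*x) * Real.sin (2*y) * Real.sin (2*z) := by
      have h : HasDerivAt (fun x' => tgvB1 x' y z)
          (-2 * Real.sin (2*x) * Real.sin (2*y) * Real.sin (2*z)) x := by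
        have := (((hd_cos 2 x).mul_const (Real.sin (2*y))).mul_const (Real.sin (2*z)))
        exact this.congr_deriv (by ring)
      exact h.deriv
    have hb2y : deriv (fun y' => tgvB2 x y' z) y
        = 2 * Real.sin (2*x) * Real.sin (2*y) * Real.sin (2*z) := by
      have h : HasDerivAt (fun y' => tgvB2 x y' z)
          (2 * Real.sin (2*x) * Real.sin (2*y) * Real.sin (2*z)) y := by
        have := ((((hd_cos 2 y).const_mul (Real.sin (2*x))).mul_const (Real.sin (2*z))).neg)
        exact this.congr_deriv (by ring)
      exact h.deriv
    have hb2x : deriv (fun x' => tgvB2 x' y z) x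
        = -(2 * Real.cos (2*x) * Real.cos (2*y) * Real.sin (2*z)) := by
      have h : HasDerivAt (fun x' => tgvB2 x' y z)
          (-(2 * Real.cos (2*x) * Real.cos (2*y) * Real.sin (2*z))) x := by
        have := ((((hd_sin 2 x).mul_const (Real.cos (2*y))).mul_const (Real.sin (2*z))).neg)
        exact this.congr_deriv (by ring)
      exact h.deriv
    have hb1y : deriv (fun y' => tgvB1 x y' z) y
        = 2 * Real.cos (2*x) * Real.cos (2*y) * Real.sin (2*z) := by
      have h : HasDerivAt (fun y' => tgvB1 x y' z)
          (2 * Real.cos (2*x) * Real.cos (2*y) * Real.sin (2*z)) y := by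
        have := (((hd_sin 2 y).const_mul (Real.cos (2*x))).mul_const (Real.sin (2*z)))
        exact this.congr_deriv (by ring)
      exact h.deriv
    rw [hv1x, hv2y, hv2x, hv1y, hb1x, hb2y, hb2x, hb1y]
    rw [show (4:ℝ)*x = 2*(2*x) by ring, show (4:ℝ)*y = 2*(2*y) by ring]
    have e1 : Real.cos (2*(2*x)) = 2 * Real.cos (2*x) ^ 2 - 1 := Real.cos_two_mul (2*x)
    have e2 : Real.cos (2*(2*y)) = 2 * Real.cos (2*y) ^ 2 - 1 := Real.cos_two_mul (2*y)
    have e3 : Real.cos (2*x) = 2 * Real.cos x ^ 2 - 1 := Real.cos_two_mul x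
    have e4 : Real.cos (2*y) = 2 * Real.cos y ^ 2 - 1 := Real.cos_two_mul y
    have s1 : Real.sin x ^ 2 = 1 - Real.cos x ^ 2 := Real.sin_sq x
    have s2 : Real.sin y ^ 2 = 1 - Real.cos y ^ 2 := Real.sin_sq y
    have s3 : Real.sin (2*x) ^ 2 = 1 - Real.cos (2*x) ^ 2 := Real.sin_sq (2*x)
    have s4 : Real.sin (2*y) ^ 2 = 1 - Real.cos (2*y) ^ 2 := Real.sin_sq (2*y)
    linear_combination (-4 * Real.sin (2*z) ^ 2) * e1 + (-4 * Real.sin (2*z) ^ 2) * e2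
      + (- Real.cos z ^ 2) * e3 + (- Real.cos z ^ 2) * e4
      + (-2 * Real.cos z ^ 2 * Real.sin x ^ 2) * s2
      + (-2 * Real.cos z ^ 2 * (1 - Real.cos y ^ 2)) * s1
      + (-8 * Real.sin (2*z) ^ 2 * Real.sin (2*x) ^ 2) * s4
      + (-8 * Real.sin (2*z) ^ 2 * (1 - Real.cos (2*y) ^ 2)) * s3
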